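/- For the surface of revolution r(u,v) = (u sinh v, u cosh v, f(u)), u > 0, with f twice differentiable, the induced Laplace operator satisfies Δr₁ = 0, Δr₂ = 0 and Δr₃ = −f''(u) − f'(u)/u, where r₁(u,v) = u sinh v, r₂(u,v) = u cosh v, r₃(u,v) = f(u). -/

import Mathlib

/-- The Laplace operator of the first fundamental form of the surface of revolution
`r(u,v) = (u sinh v, u cosh v, f(u))` in the semi-isotropic space, where `E = −1`,
`F = 0`, `G = u²` and `W = EG − F² = −u²`, following the general formula
`Δψ = −(1/√|W|)[∂_u((Gψ_u − Fψ_v)/√|W|) − ∂_v((Fψ_u − Eψ_v)/√|W|)]`. -/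
noncomputable def lapI (ψ : ℝ → ℝ → ℝ) (u v : ℝ) : ℝ :=
  -(1 / Real.sqrt |(-1 : ℝ) * u ^ 2 - 0 ^ 2|) *
    (deriv (fun t =>
        (t ^ 2 * deriv (fun s => ψ s v) t - 0 * deriv (fun s => ψ t s) v) /
          Real.sqrt |(-1 : ℝ) * t ^ 2 - 0 ^ 2|) u
      - deriv (fun w =>
        (0 * deriv (fun s => ψ s w) u - (-1 : ℝ) * deriv (fun s => ψ u s) w) /
          Real.sqrt |(-1 : ℝ) * u ^ 2 - 0 ^ 2|) v)

lemma sqrtW (t : ℝ) : Real.sqrt |(-1 : ℝ) * t ^ 2 - 0 ^ 2| = |t| := by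
  rw [show (-1 : ℝ) * t ^ 2 - 0 ^ 2 = -(t ^ 2) by ring, abs_neg,
    abs_of_nonneg (sq_nonneg t), Real.sqrt_sq_eq_abs]

/-- For the surface of revolution `r(u,v) = (u sinh v, u cosh v, f(u))`, `u > 0`, with `f`
twice differentiable, the induced Laplace operator satisfies `Δr₁ = 0`, `Δr₂ = 0` and
`Δr₃ = −f''(u) − f'(u)/u`, where `r₁ = u sinh v`, `r₂ = u cosh v`, `r₃ = f(u)`. -/
theorem surface_of_revolution_laplacian
    (f : ℝ → ℝ)
    (hf : ∀ u ∈ Set.Ioi (0 : ℝ), DifferentiableAt ℝ f u)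
    (hf' : ∀ u ∈ Set.Ioi (0 : ℝ), DifferentiableAt ℝ (deriv f) u)
    (u v : ℝ) (hu : 0 < u) :
    lapI (fun u v => u * Real.sinh v) u v = 0 ∧
    lapI (fun u v => u * Real.cosh v) u v = 0 ∧
    lapI (fun u _ => f u) u v = -(deriv (deriv f) u) - deriv f u / u := by
  have hu0 : u ≠ 0 := hu.ne'
  have hmem : Set.Ioi (0 : ℝ) ∈ nhds u := Ioi_mem_nhds hu
  refine ⟨?_, ?_, ?_⟩
  · unfold lapI
    have h1 : deriv (fun t =>
        (t ^ 2 * deriv (fun s => s * Real.sinh v) t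
          - 0 * deriv (fun s => t * Real.sinh s) v) /
          Real.sqrt |(-1 : ℝ) * t ^ 2 - 0 ^ 2|) u = Real.sinh v := by
      have heq : (fun t =>
          (t ^ 2 * deriv (fun s => s * Real.sinh v) t
            - 0 * deriv (fun s => t * Real.sinh s) v) /
            Real.sqrt |(-1 : ℝ) * t ^ 2 - 0 ^ 2|) =ᶠ[nhds u]
          (fun t => t * Real.sinh v) := by
        filter_upwards [hmem] with t ht
        rw [sqrtW t, abs_of_pos ht]
        have : deriv (fun s : ℝ => s * Real.sinh v) t = Real.sinh v := by
          simp
        rw [this]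
        have ht0 : t ≠ 0 := (Set.mem_Ioi.mp ht).ne'
        field_simp [ht0]
        ring
      rw [heq.deriv_eq]
      have : DifferentiableAt ℝ (fun t : ℝ => t * Real.sinh v) u := by fun_prop
      simp
    have h2 : deriv (fun w =>
        (0 * deriv (fun s => s * Real.sinh w) u
          - (-1 : ℝ) * deriv (fun s => u * Real.sinh s) w) /
          Real.sqrt |(-1 : ℝ) * u ^ 2 - 0 ^ 2|) v = Real.sinh v := by
      have heq : (fun w =>
          (0 * deriv (fun s => s * Real.sinh w) u
            - (-1 : ℝ) * deriv (fun s => u * Real.sinh s) w) /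
            Real.sqrt |(-1 : ℝ) * u ^ 2 - 0 ^ 2|) = fun w => Real.cosh w := by
        funext w
        rw [sqrtW u, abs_of_pos hu]
        have : deriv (fun s : ℝ => u * Real.sinh s) w = u * Real.cosh w := by
          simp
        rw [this]
        field_simp
        ring
      rw [heq]
      simp
    rw [h1, h2]
    ring
  · unfold lapI
    have h1 : deriv (fun t =>
        (t ^ 2 * deriv (fun s => s * Real.cosh v) t
          - 0 * deriv (fun s => t * Real.cosh s) v) /
          Real.sqrt |(-1 : ℝ) * t ^ 2 - 0 ^ 2|) u = Real.cosh v := by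
      have heq : (fun t =>
          (t ^ 2 * deriv (fun s => s * Real.cosh v) t
            - 0 * deriv (fun s => t * Real.cosh s) v) /
            Real.sqrt |(-1 : ℝ) * t ^ 2 - 0 ^ 2|) =ᶠ[nhds u]
          (fun t => t * Real.cosh v) := by
        filter_upwards [hmem] with t ht
        rw [sqrtW t, abs_of_pos ht]
        have : deriv (fun s : ℝ => s * Real.cosh v) t = Real.cosh v := by
          simp
        rw [this]
        have ht0 : t ≠ 0 := (Set.mem_Ioi.mp ht).ne'
        field_simp [ht0]
        ring
      rw [heq.deriv_eq]
      simp
    have h2 : deriv (fun w =>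
        (0 * deriv (fun s => s * Real.cosh w) u
          - (-1 : ℝ) * deriv (fun s => u * Real.cosh s) w) /
          Real.sqrt |(-1 : ℝ) * u ^ 2 - 0 ^ 2|) v = Real.cosh v := by
      have heq : (fun w =>
          (0 * deriv (fun s => s * Real.cosh w) u
            - (-1 : ℝ) * deriv (fun s => u * Real.cosh s) w) /
            Real.sqrt |(-1 : ℝ) * u ^ 2 - 0 ^ 2|) = fun w => Real.sinh w := by
        funext w
        rw [sqrtW u, abs_of_pos hu]
        have : deriv (fun s : ℝ => u * Real.cosh s) w = u * Real.sinh w := by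
          simp
        rw [this]
        field_simp
        ring
      rw [heq]
      simp
    rw [h1, h2]
    ring
  · unfold lapI
    have h1 : deriv (fun t =>
        (t ^ 2 * deriv (fun s => f s) t - 0 * deriv (fun _ : ℝ => f t) v) /
          Real.sqrt |(-1 : ℝ) * t ^ 2 - 0 ^ 2|) u
        = deriv f u + u * deriv (deriv f) u := by
      have heq : (fun t =>
          (t ^ 2 * deriv (fun s => f s) t - 0 * deriv (fun _ : ℝ => f t) v) /
            Real.sqrt |(-1 : ℝ) * t ^ 2 - 0 ^ 2|) =ᶠ[nhds u]
          (fun t => t * deriv f t) := by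
        filter_upwards [hmem] with t ht
        rw [sqrtW t, abs_of_pos ht]
        have ht0 : t ≠ 0 := (Set.mem_Ioi.mp ht).ne'
        field_simp [ht0]
        ring
      rw [heq.deriv_eq]
      rw [deriv_fun_mul (by fun_prop) (hf' u (by exact hu))]
      simp
    have h2 : deriv (fun w =>
        (0 * deriv (fun s => f s) u - (-1 : ℝ) * deriv (fun _ : ℝ => f u) w) /
          Real.sqrt |(-1 : ℝ) * u ^ 2 - 0 ^ 2|) v = 0 := by
      have heq : (fun w =>
          (0 * deriv (fun s => f s) u - (-1 : ℝ) * deriv (fun _ : ℝ => f u) w) /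
            Real.sqrt |(-1 : ℝ) * u ^ 2 - 0 ^ 2|) = fun _ => (0 : ℝ) := by
        funext w
        simp
      rw [heq]
      simp
    rw [h1, h2, sqrtW u, abs_of_pos hu]
    field_simp
    ring
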